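/- If two triples (A, B, C) and (A', B', C') of matrices in SU(2) have the same spectral invariants, i.e. det(λA + μB + νC) = det(λA' + μB' + νC') for all complex λ, μ, ν, then they lie in the same double coset of the diagonal subgroup: there exist U, V ∈ SU(2) such that A' = UAV, B' = UBV and C' = UCV. -/

import Mathlib

set_option autoImplicit false
set_option maxHeartbeats 1000000

open Matrix Complex ComplexConjugate

noncomputable section SU2Aux

abbrev M2 := Matrix (Fin 2) (Fin 2) ℂ

def SU2 (M : M2) : Prop := M ∈ Matrix.specialUnitaryGroup (Fin 2) ℂ

lemma su2_one : SU2 1 := Submonoid.one_mem _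

lemma su2_mul {M N : M2} (hM : SU2 M) (hN : SU2 N) : SU2 (M * N) := mul_mem hM hN

lemma su2_det {M : M2} (hM : SU2 M) : M.det = 1 :=
  (Matrix.mem_specialUnitaryGroup_iff.mp hM).2

lemma su2_star_mul_self {M : M2} (hM : SU2 M) : star M * M = 1 := hM.1.1

lemma su2_mul_star_self {M : M2} (hM : SU2 M) : M * star M = 1 := hM.1.2

lemma su2_star {M : M2} (hM : SU2 M) : SU2 (star M) := by
  refine Matrix.mem_specialUnitaryGroup_iff.mpr ⟨Unitary.star_mem hM.1, ?_⟩
  show Matrix.det (Mᴴ) = 1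
  rw [Matrix.det_conjTranspose, su2_det hM]
  exact star_one _

lemma fin2_ext {e00 e01 e10 e11 f00 f01 f10 f11 : ℂ} (h00 : e00 = f00) (h01 : e01 = f01)
    (h10 : e10 = f10) (h11 : e11 = f11) :
    (!![e00, e01; e10, e11] : M2) = !![f00, f01; f10, f11] := by
  rw [h00, h01, h10, h11]

lemma star_fin2 (a b c d : ℂ) :
    star (!![a, b; c, d] : M2) = !![conj a, conj c; conj b, conj d] := by
  ext i j
  fin_cases i <;> fin_cases j <;> simp [Matrix.star_apply]

lemma mem_of_form {a b : ℂ} (hab : a * conj a + b * conj b = 1) :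
    SU2 !![a, b; -conj b, conj a] := by
  refine Matrix.mem_specialUnitaryGroup_iff.mpr ⟨Matrix.mem_unitaryGroup_iff.mpr ?_, ?_⟩
  · show _ * star (!![a, b; -conj b, conj a] : M2) = 1
    rw [star_fin2, Matrix.mul_fin_two]
    have h1 : (1 : M2) = !![1, 0; 0, 1] := by
      ext i j; fin_cases i <;> fin_cases j <;> simp [Matrix.one_apply]
    rw [h1]
    apply fin2_ext
    · linear_combination hab
    · simp; ring
    · simp; ring
    · simp; linear_combination hab
  · show Matrix.det _ = 1
    rw [Matrix.det_fin_two_of]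
    linear_combination hab

lemma form_of_mem {M : M2} (hM : SU2 M) :
    ∃ a b : ℂ, a * conj a + b * conj b = 1 ∧ M = !![a, b; -conj b, conj a] := by
  obtain ⟨a, b, c, d, rfl⟩ : ∃ a b c d, M = !![a, b; c, d] :=
    ⟨_, _, _, _, Matrix.eta_fin_two M⟩
  have hdet : a * d - b * c = 1 := by
    have := su2_det hM; rwa [Matrix.det_fin_two_of] at this
  have hinv : (!![a, b; c, d] : M2)⁻¹ = star !![a, b; c, d] :=
    Matrix.inv_eq_right_inv (su2_mul_star_self hM)
  have hadj : (!![a, b; c, d] : M2)⁻¹ = Matrix.adjugate !![a, b; c, d] := by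
    rw [Matrix.inv_def, su2_det hM]
    simp
  have hsa : star (!![a, b; c, d] : M2) = !![d, -b; -c, a] := by
    rw [← hinv, hadj, Matrix.adjugate_fin_two]
    simp
  rw [star_fin2] at hsa
  have e00 : conj a = d := by
    have := congr_fun (congr_fun hsa 0) 0
    simpa using this
  have e10 : conj b = -c := by
    have := congr_fun (congr_fun hsa 1) 0
    simpa using this
  refine ⟨a, b, ?_, ?_⟩
  · rw [e00, e10]; linear_combination hdet
  · rw [e10, e00]
    simp

lemma det_add_eq {M N : M2} (hM : SU2 M) (hN : SU2 N) :
    Matrix.det (M + N) = 2 + Matrix.trace (star M * N) := by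
  obtain ⟨a, b, hab, rfl⟩ := form_of_mem hM
  obtain ⟨c, d, hcd, rfl⟩ := form_of_mem hN
  rw [Matrix.det_fin_two, Matrix.trace_fin_two]
  simp [Matrix.mul_apply, Fin.sum_univ_two, Matrix.star_apply]
  ring_nf
  linear_combination hab + hcd

lemma trace_conj {V M : M2} (hV : SU2 V) :
    Matrix.trace (star V * M * V) = Matrix.trace M := by
  rw [Matrix.trace_mul_comm, ← mul_assoc, su2_mul_star_self hV, one_mul]

lemma su2_conj_mul {V M N : M2} (hV : SU2 V) :
    (star V * M * V) * (star V * N * V) = star V * (M * N) * V := by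
  have h := su2_mul_star_self hV
  simp only [mul_assoc]
  rw [← mul_assoc V (star V) (N * V), h, one_mul]

lemma su2_star_conj {V M : M2} :
    star (star V * M * V) = star V * star M * V := by
  simp only [StarMul.star_mul, star_star, mul_assoc]

lemma conj_transfer {V M D : M2} (hV : SU2 V) (h : star V * M * V = D) :
    M = V * D * star V := by
  rw [← h]
  simp only [← mul_assoc]
  rw [su2_mul_star_self hV, one_mul, mul_assoc, su2_mul_star_self hV, mul_one]

/-- diagonalization of an SU2 matrix inside SU2, with canonical eigenvalue order -/
lemma diagonalize {a b : ℂ} (hab : a * conj a + b * conj b = 1) :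
    ∃ V, SU2 V ∧ star V * !![a, b; -conj b, conj a] * V
      = !![(a.re : ℂ) + Real.sqrt (1 - a.re ^ 2) * I, 0;
           0, (a.re : ℂ) - Real.sqrt (1 - a.re ^ 2) * I] := by
  set t := a.re with ht
  set α := a.im with hα
  have ha : a = (t : ℂ) + (α : ℂ) * I := by
    rw [ht, hα, Complex.re_add_im]
  have hconja : conj a = (t : ℂ) - (α : ℂ) * I := by
    rw [ha]
    simp [Complex.conj_ofReal, Complex.conj_I]
    ring
  have key : Complex.normSq a + Complex.normSq b = 1 := by
    have h := hab
    rw [Complex.mul_conj, Complex.mul_conj] at h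
    exact_mod_cast h
  have hna : Complex.normSq a = t ^ 2 + α ^ 2 := by
    rw [Complex.normSq_apply]; ring
  have hnb : Complex.normSq b = 1 - t ^ 2 - α ^ 2 := by linarith
  have ht1 : t ^ 2 + α ^ 2 ≤ 1 := by nlinarith [Complex.normSq_nonneg b]
  set s := Real.sqrt (1 - t ^ 2) with hsdef
  have hs0 : 0 ≤ s := Real.sqrt_nonneg _
  have hs2 : s ^ 2 = 1 - t ^ 2 := Real.sq_sqrt (by nlinarith)
  have hbb : b * conj b = ((s ^ 2 - α ^ 2 : ℝ) : ℂ) := by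
    rw [Complex.mul_conj]
    norm_cast
    rw [hnb, hs2]
  have hI : (I : ℂ) * I = -1 := Complex.I_mul_I
  have hbbC : b * conj b = (s : ℂ) ^ 2 - (α : ℂ) ^ 2 := by rw [hbb]; push_cast; ring
  by_cases hb : b = 0
  · have hnb0 : Complex.normSq b = 0 := by rw [hb]; simp
    have hα2 : α ^ 2 = s ^ 2 := by rw [hs2]; linarith
    rcases le_or_gt 0 α with hα0 | hα0
    · have hαs : α = s := by nlinarith
      refine ⟨1, su2_one, ?_⟩
      rw [star_one, one_mul, mul_one, hb, hconja, ha, hαs]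
      apply fin2_ext <;> simp <;> ring
    · have hαs : α = -s := by nlinarith
      refine ⟨!![0, 1; -conj 1, conj 0], mem_of_form (by simp), ?_⟩
      rw [hb, star_fin2, hconja, ha, hαs]
      rw [Matrix.mul_fin_two, Matrix.mul_fin_two]
      apply fin2_ext <;> simp <;> push_cast <;> ring
  · -- generic case
    have hnbpos : 0 < Complex.normSq b := Complex.normSq_pos.mpr hb
    have hineq : 0 < s ^ 2 - α ^ 2 := by rw [hs2]; linarith
    have hspos : 0 < s := by nlinarith
    have hsα : α < s := by nlinarith
    set c : ℝ := Real.sqrt (2 * s * (s - α)) with hcdef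
    have hc2 : c ^ 2 = 2 * s * (s - α) := Real.sq_sqrt (by nlinarith)
    have hcpos : 0 < c := Real.sqrt_pos.mpr (by nlinarith)
    have hcC : (c : ℂ) ≠ 0 := Complex.ofReal_ne_zero.mpr hcpos.ne'
    have hc2C : ((c : ℂ)) ^ 2 = 2 * (s : ℂ) * ((s : ℂ) - (α : ℂ)) := by
      exact_mod_cast congrArg (fun x : ℝ => (x : ℂ)) hc2
    set p : ℂ := b / (c : ℂ) with hpdef
    set q : ℂ := ((s : ℂ) - (α : ℂ)) / (c : ℂ) * I with hqdef
    have hconjq : conj q = -q := by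
      rw [hqdef]
      simp [map_div₀, Complex.conj_ofReal, Complex.conj_I]
      try ring
    have hconjp : conj p = conj b / (c : ℂ) := by
      rw [hpdef, map_div₀, Complex.conj_ofReal]
    have hmem : SU2 !![p, q; -conj q, conj p] := by
      apply mem_of_form
      rw [hconjq, hconjp, hpdef, hqdef]
      field_simp
      linear_combination hbbC - ((s:ℂ) - (α:ℂ)) ^ 2 * Complex.I_sq - hc2C
    refine ⟨!![p, q; -conj q, conj p], hmem, ?_⟩
    have hMV : !![a, b; -conj b, conj a] * !![p, q; -conj q, conj p]
        = !![p, q; -conj q, conj p]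
          * !![(t : ℂ) + s * I, 0; 0, (t : ℂ) - s * I] := by
      rw [Matrix.mul_fin_two, Matrix.mul_fin_two]
      rw [hconjq, hconjp, hconja, ha, hpdef, hqdef]
      apply fin2_ext
      · field_simp
        ring
      · field_simp
        linear_combination hbbC + ((s:ℂ) ^ 2 - (α:ℂ) ^ 2) * Complex.I_sq
      · field_simp
        linear_combination (-1:ℂ) * hbbC - ((s:ℂ) ^ 2 - (α:ℂ) ^ 2) * Complex.I_sq
      · field_simp
        ring
    calc star !![p, q; -conj q, conj p] * !![a, b; -conj b, conj a] * !![p, q; -conj q, conj p]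
        = star !![p, q; -conj q, conj p] * (!![p, q; -conj q, conj p]
            * !![(t : ℂ) + s * I, 0; 0, (t : ℂ) - s * I]) := by
          rw [mul_assoc, hMV]
      _ = _ := by
          rw [← mul_assoc, su2_star_mul_self hmem, one_mul]

/-- one-matrix conjugacy from equal traces -/
lemma single_conj {Q Q' : M2} (hQ : SU2 Q) (hQ' : SU2 Q')
    (h2 : Matrix.trace Q = Matrix.trace Q') :
    ∃ W, SU2 W ∧ Q' = star W * Q * W := by
  obtain ⟨a, b, hab, hQf⟩ := form_of_mem hQ
  obtain ⟨a', b', hab', hQ'f⟩ := form_of_mem hQ'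
  have htr : a + conj a = a' + conj a' := by
    rw [hQf, hQ'f] at h2
    simpa [Matrix.trace_fin_two] using h2
  have hre : a.re = a'.re := by
    have := congrArg Complex.re htr
    simp [Complex.add_re, Complex.conj_re] at this
    linarith
  obtain ⟨V, hV, hVeq⟩ := diagonalize hab
  obtain ⟨V', hV', hV'eq⟩ := diagonalize hab'
  rw [← hre] at hV'eq
  rw [← hQf] at hVeq
  rw [← hQ'f] at hV'eq
  refine ⟨V * star V', su2_mul hV (su2_star hV'), ?_⟩
  have e1 := conj_transfer hV' hV'eq
  rw [← hVeq] at e1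
  rw [e1]
  simp only [StarMul.star_mul, star_star, mul_assoc]

/-- conjugating a pair where the first element is diagonal -/
lemma pair_step {t s : ℝ} (hs : 0 ≤ s) (hts : s ^ 2 = 1 - t ^ 2)
    {Q Q' : M2} (hQ : SU2 Q) (hQ' : SU2 Q')
    (h2 : Matrix.trace Q = Matrix.trace Q')
    (h3 : Matrix.trace (star (!![(t:ℂ) + s * I, 0; 0, (t:ℂ) - s * I] : M2) * Q)
        = Matrix.trace (star (!![(t:ℂ) + s * I, 0; 0, (t:ℂ) - s * I] : M2) * Q')) :
    ∃ W, SU2 W ∧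
      star W * (!![(t:ℂ) + s * I, 0; 0, (t:ℂ) - s * I] : M2) * W
        = !![(t:ℂ) + s * I, 0; 0, (t:ℂ) - s * I] ∧
      Q' = star W * Q * W := by
  rcases eq_or_lt_of_le hs with hs0 | hs0
  · -- s = 0 : the diagonal matrix is scalar
    obtain ⟨W, hW, hWeq⟩ := single_conj hQ hQ' h2
    refine ⟨W, hW, ?_, hWeq⟩
    have hD : (!![(t:ℂ) + s * I, 0; 0, (t:ℂ) - s * I] : M2) = (t : ℂ) • (1 : M2) := by
      rw [← hs0]
      ext i j
      fin_cases i <;> fin_cases j <;> simp [Matrix.one_apply]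
    rw [hD, mul_smul_comm, mul_one, smul_mul_assoc, su2_star_mul_self hW]
  · obtain ⟨c, d, hcd, hQf⟩ := form_of_mem hQ
    obtain ⟨c', d', hcd', hQ'f⟩ := form_of_mem hQ'
    have hsne : (s : ℝ) ≠ 0 := ne_of_gt hs0
    have hstarD : star (!![(t:ℂ) + s * I, 0; 0, (t:ℂ) - s * I] : M2)
        = !![(t:ℂ) - s * I, 0; 0, (t:ℂ) + s * I] := by
      rw [star_fin2]
      apply fin2_ext <;> simp [Complex.conj_ofReal, Complex.conj_I] <;> ring
    have htr2 : c + conj c = c' + conj c' := by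
      rw [hQf, hQ'f] at h2
      simpa [Matrix.trace_fin_two] using h2
    have htr3 : ((t:ℂ) - s*I) * c + ((t:ℂ) + s*I) * conj c
        = ((t:ℂ) - s*I) * c' + ((t:ℂ) + s*I) * conj c' := by
      rw [hQf, hQ'f, hstarD] at h3
      simp only [Matrix.mul_fin_two, Matrix.trace_fin_two] at h3
      simp at h3
      linear_combination h3
    have hcc : c = c' := by
      have hkey : ((-2:ℂ) * s * I) * (c - c') = 0 := by
        linear_combination htr3 - ((t:ℂ) + s*I) * htr2
      have h2s : ((-2:ℂ) * s * I) ≠ 0 :=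
        mul_ne_zero (mul_ne_zero (by norm_num) (Complex.ofReal_ne_zero.mpr hsne))
          Complex.I_ne_zero
      rcases mul_eq_zero.mp hkey with h | h
      · exact absurd h h2s
      · exact sub_eq_zero.mp h
    subst hcc
    have hdd : d * conj d = d' * conj d' := by linear_combination hcd - hcd'
    by_cases hd : d = 0
    · have hd' : d' = 0 := by
        have h0 : d' * conj d' = 0 := by rw [← hdd, hd]; ring
        rw [Complex.mul_conj] at h0
        have : Complex.normSq d' = 0 := by exact_mod_cast h0
        exact Complex.normSq_eq_zero.mp this
      refine ⟨1, su2_one, by rw [star_one, one_mul, mul_one], ?_⟩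
      rw [star_one, one_mul, mul_one, hQf, hQ'f, hd, hd']
    · have hcdne : conj d ≠ 0 := fun h0 => hd (by simpa using congrArg conj h0)
      obtain ⟨ω, hω⟩ := IsAlgClosed.exists_pow_nat_eq (k := ℂ) (d'/d) (n := 2) two_pos
      have hω2 : ω ^ 2 * d = d' := by rw [hω]; field_simp
      have hω2c : conj ω ^ 2 * conj d = conj d' := by
        have := congrArg conj hω2
        simpa [map_pow] using this
      have hωu : ω * conj ω = 1 := by
        have e : (ω ^ 2) * conj (ω ^ 2) = 1 := by
          rw [hω, map_div₀, div_mul_div_comm,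
            div_eq_one_iff_eq (mul_ne_zero hd hcdne)]
          exact hdd.symm
        have h1 : (ω * conj ω) ^ 2 = 1 := by rw [mul_pow, ← map_pow]; exact e
        have h2' : ((Complex.normSq ω : ℂ)) ^ 2 = 1 := by rw [← Complex.mul_conj]; exact h1
        have h3' : (Complex.normSq ω) ^ 2 = 1 := by exact_mod_cast h2'
        have h4 : Complex.normSq ω = 1 := by nlinarith [Complex.normSq_nonneg ω]
        rw [Complex.mul_conj, h4]
        norm_num
      refine ⟨!![conj ω, 0; -conj 0, conj (conj ω)], mem_of_form ?_, ?_, ?_⟩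
      · rw [Complex.conj_conj]
        simp
        linear_combination hωu
      · rw [star_fin2]
        simp only [Complex.conj_conj, map_zero, map_neg, neg_zero]
        rw [Matrix.mul_fin_two, Matrix.mul_fin_two]
        apply fin2_ext
        · simp; linear_combination ((t:ℂ) + s*I) * hωu
        · simp
        · simp
        · simp; linear_combination ((t:ℂ) - s*I) * hωu
      · rw [hQf, hQ'f, star_fin2]
        simp only [Complex.conj_conj, map_zero, map_neg, neg_zero]
        rw [Matrix.mul_fin_two, Matrix.mul_fin_two]
        apply fin2_ext
        · simp; linear_combination (-c) * hωu
        · simp; linear_combination -hω2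
        · simp; linear_combination -hω2c
        · simp; linear_combination (-(conj c)) * hωu

/-- simultaneous conjugacy of pairs in SU2 with equal trace invariants -/
lemma pair_conj {P Q P' Q' : M2} (hP : SU2 P) (hQ : SU2 Q) (hP' : SU2 P') (hQ' : SU2 Q')
    (h1 : Matrix.trace P = Matrix.trace P')
    (h2 : Matrix.trace Q = Matrix.trace Q')
    (h3 : Matrix.trace (star P * Q) = Matrix.trace (star P' * Q')) :
    ∃ V, SU2 V ∧ P' = star V * P * V ∧ Q' = star V * Q * V := by
  obtain ⟨a, b, hab, hPf⟩ := form_of_mem hP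
  obtain ⟨a', b', hab', hP'f⟩ := form_of_mem hP'
  have htr : a + conj a = a' + conj a' := by
    rw [hPf, hP'f] at h1
    simpa [Matrix.trace_fin_two] using h1
  have hre : a.re = a'.re := by
    have := congrArg Complex.re htr
    simp [Complex.add_re, Complex.conj_re] at this
    linarith
  obtain ⟨V₁, hV₁, hD₁⟩ := diagonalize hab
  obtain ⟨V₁', hV₁', hD₁'⟩ := diagonalize hab'
  rw [← hre] at hD₁'
  rw [← hPf] at hD₁
  rw [← hP'f] at hD₁'
  have hts : Real.sqrt (1 - a.re ^ 2) ^ 2 = 1 - a.re ^ 2 := by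
    apply Real.sq_sqrt
    have key : Complex.normSq a + Complex.normSq b = 1 := by
      have h := hab
      rw [Complex.mul_conj, Complex.mul_conj] at h
      exact_mod_cast h
    have hna : Complex.normSq a = a.re ^ 2 + a.im ^ 2 := by
      rw [Complex.normSq_apply]; ring
    nlinarith [Complex.normSq_nonneg b]
  have hQt : SU2 (star V₁ * Q * V₁) := su2_mul (su2_mul (su2_star hV₁) hQ) hV₁
  have hQt' : SU2 (star V₁' * Q' * V₁') := su2_mul (su2_mul (su2_star hV₁') hQ') hV₁'
  have htr2 : Matrix.trace (star V₁ * Q * V₁) = Matrix.trace (star V₁' * Q' * V₁') := by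
    rw [trace_conj hV₁, trace_conj hV₁']
    exact h2
  have htr3 : Matrix.trace
        (star (!![(a.re:ℂ) + Real.sqrt (1 - a.re ^ 2) * I, 0;
            0, (a.re:ℂ) - Real.sqrt (1 - a.re ^ 2) * I] : M2) * (star V₁ * Q * V₁))
      = Matrix.trace
        (star (!![(a.re:ℂ) + Real.sqrt (1 - a.re ^ 2) * I, 0;
            0, (a.re:ℂ) - Real.sqrt (1 - a.re ^ 2) * I] : M2) * (star V₁' * Q' * V₁')) := by
    conv_lhs => rw [← hD₁]
    conv_rhs => rw [← hD₁']
    rw [su2_star_conj, su2_star_conj, su2_conj_mul hV₁, su2_conj_mul hV₁',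
      trace_conj hV₁, trace_conj hV₁']
    exact h3
  obtain ⟨W, hWm, hWD, hWQ⟩ := pair_step (Real.sqrt_nonneg _) hts hQt hQt' htr2 htr3
  refine ⟨V₁ * W * star V₁', su2_mul (su2_mul hV₁ hWm) (su2_star hV₁'), ?_, ?_⟩
  · have e1 : star (V₁ * W * star V₁') * P * (V₁ * W * star V₁')
        = star (star V₁') * (star W * (star V₁ * P * V₁) * W) * star V₁' := by
      simp only [StarMul.star_mul, star_star, mul_assoc]
    rw [e1, hD₁, hWD, star_star]
    exact conj_transfer hV₁' hD₁'
  · have e2 : star (V₁ * W * star V₁') * Q * (V₁ * W * star V₁')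
        = star (star V₁') * (star W * (star V₁ * Q * V₁) * W) * star V₁' := by
      simp only [StarMul.star_mul, star_star, mul_assoc]
    rw [e2, ← hWQ, star_star]
    exact conj_transfer hV₁' rfl

end SU2Aux

/-- two triples of `SU(2)` matrices with the same spectral invariants lie in the
same double coset of the diagonal subgroup. -/
theorem same_spectral_curve_iff_same_double_coset
    (A B C A' B' C' : Matrix.specialUnitaryGroup (Fin 2) ℂ)
    (h : ∀ l m n : ℂ,
      Matrix.det (l • (A : Matrix (Fin 2) (Fin 2) ℂ) + m • (B : Matrix (Fin 2) (Fin 2) ℂ)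
          + n • (C : Matrix (Fin 2) (Fin 2) ℂ))
        = Matrix.det (l • (A' : Matrix (Fin 2) (Fin 2) ℂ) + m • (B' : Matrix (Fin 2) (Fin 2) ℂ)
          + n • (C' : Matrix (Fin 2) (Fin 2) ℂ))) :
    ∃ U V : Matrix.specialUnitaryGroup (Fin 2) ℂ,
      (A' : Matrix (Fin 2) (Fin 2) ℂ) = (U : Matrix (Fin 2) (Fin 2) ℂ) * A * V ∧
      (B' : Matrix (Fin 2) (Fin 2) ℂ) = (U : Matrix (Fin 2) (Fin 2) ℂ) * B * V ∧
      (C' : Matrix (Fin 2) (Fin 2) ℂ) = (U : Matrix (Fin 2) (Fin 2) ℂ) * C * V := by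
  obtain ⟨SA, hA⟩ := A
  obtain ⟨SB, hB⟩ := B
  obtain ⟨SC, hC⟩ := C
  obtain ⟨SA', hA'⟩ := A'
  obtain ⟨SB', hB'⟩ := B'
  obtain ⟨SC', hC'⟩ := C'
  simp only [Submonoid.mk_mul_mk] at h ⊢
  have hA : SU2 SA := hA
  have hB : SU2 SB := hB
  have hC : SU2 SC := hC
  have hA' : SU2 SA' := hA'
  have hB' : SU2 SB' := hB'
  have hC' : SU2 SC' := hC'
  have e1 := h 1 1 0
  have e2 := h 1 0 1
  have e3 := h 0 1 1
  simp only [one_smul, zero_smul, add_zero, zero_add] at e1 e2 e3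
  rw [det_add_eq hA hB, det_add_eq hA' hB'] at e1
  rw [det_add_eq hA hC, det_add_eq hA' hC'] at e2
  rw [det_add_eq hB hC, det_add_eq hB' hC'] at e3
  have t1 := add_left_cancel e1
  have t2 := add_left_cancel e2
  have t3 := add_left_cancel e3
  have hPm : SU2 (star SA * SB) := su2_mul (su2_star hA) hB
  have hQm : SU2 (star SA * SC) := su2_mul (su2_star hA) hC
  have hPm' : SU2 (star SA' * SB') := su2_mul (su2_star hA') hB'
  have hQm' : SU2 (star SA' * SC') := su2_mul (su2_star hA') hC'
  have hred : ∀ (X Y Z : M2), SU2 X → star (star X * Y) * (star X * Z) = star Y * Z := by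
    intro X Y Z hX
    rw [StarMul.star_mul, star_star]
    simp only [mul_assoc]
    rw [← mul_assoc X (star X) Z, su2_mul_star_self hX, one_mul]
  have t3' : Matrix.trace (star (star SA * SB) * (star SA * SC))
      = Matrix.trace (star (star SA' * SB') * (star SA' * SC')) := by
    rw [hred SA SB SC hA, hred SA' SB' SC' hA']
    exact t3
  obtain ⟨V, hV, hPe, hQe⟩ := pair_conj hPm hQm hPm' hQm' t1 t2 t3'
  have hUm : SU2 (SA' * (star V * star SA)) :=
    su2_mul hA' (su2_mul (su2_star hV) (su2_star hA))
  refine ⟨⟨SA' * (star V * star SA), hUm⟩, ⟨V, hV⟩, ?_, ?_, ?_⟩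
  · show SA' = SA' * (star V * star SA) * SA * V
    calc SA' = SA' * (star V * V) := by rw [su2_star_mul_self hV, mul_one]
      _ = SA' * (star V * ((star SA * SA) * V)) := by rw [su2_star_mul_self hA, one_mul]
      _ = SA' * (star V * star SA) * SA * V := by simp only [mul_assoc]
  · show SB' = SA' * (star V * star SA) * SB * V
    calc SB' = SA' * (star SA' * SB') := by
          rw [← mul_assoc, su2_mul_star_self hA', one_mul]
      _ = SA' * (star V * (star SA * SB) * V) := by rw [hPe]
      _ = SA' * (star V * star SA) * SB * V := by simp only [mul_assoc]
  · show SC' = SA' * (star V * star SA) * SC * V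
    calc SC' = SA' * (star SA' * SC') := by
          rw [← mul_assoc, su2_mul_star_self hA', one_mul]
      _ = SA' * (star V * (star SA * SC) * V) := by rw [hQe]
      _ = SA' * (star V * star SA) * SC * V := by simp only [mul_assoc]
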